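/- arXiv:2210.05955 — 4 statements merged into one kernel-verified Lean document; each statement's English description precedes it below -/
import Mathlib

section
/- Let A be a real d×d matrix with d distinct real eigenvalues λ₁,...,λ_d, and let x₀ ∈ ℝ^d be such that {x₀, Ax₀, ..., A^{d-1}x₀} is linearly independent. Then for any Δt > 0 and any t₁ ≥ 0, the d vectors x_j = exp(A t_j) x₀, where t_j = t₁ + (j-1)Δt for j = 1,...,d, are linearly independent (equivalently, the matrix with columns x₁,...,x_d is invertible). -/
open Matrix

lemma aux_fam (d : ℕ) (Q : Matrix (Fin d) (Fin d) ℝ) (c μ : Fin d → ℝ) :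
    (fun j : Fin d => Q.mulVec (fun i => c i * μ i ^ (j : ℕ)))
      = fun j => (Q * diagonal c * vandermonde μ)ᵀ j := by
  funext j i
  simp [mulVec, dotProduct, Matrix.mul_apply, Matrix.mul_diagonal, vandermonde, mul_assoc,
    diagonal_apply, ite_mul, zero_mul, Finset.sum_ite_eq]

lemma aux_li (d : ℕ) (Q : Matrix (Fin d) (Fin d) ℝ) (hQ : IsUnit Q.det)
    (c μ : Fin d → ℝ) (hc : ∀ i, c i ≠ 0) (hμ : Function.Injective μ) :
    LinearIndependent ℝ (fun j : Fin d => Q.mulVec (fun i => c i * μ i ^ (j : ℕ))) := by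
  rw [aux_fam, show (fun j => (Q * diagonal c * vandermonde μ)ᵀ j) = (Q * diagonal c * vandermonde μ).col from rfl, linearIndependent_cols_iff_isUnit, Matrix.isUnit_iff_isUnit_det,
    det_mul, det_mul, det_diagonal, isUnit_iff_ne_zero]
  refine mul_ne_zero (mul_ne_zero (hQ.ne_zero) (Finset.prod_ne_zero_iff.2 fun i _ => hc i)) ?_
  exact det_vandermonde_ne_zero_iff.2 hμ

lemma aux_y (d : ℕ) (Q : Matrix (Fin d) (Fin d) ℝ) (c μ : Fin d → ℝ)
    (h : LinearIndependent ℝ (fun j : Fin d => Q.mulVec (fun i => c i * μ i ^ (j : ℕ)))) :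
    ∀ i, c i ≠ 0 := by
  rw [aux_fam, show (fun j => (Q * diagonal c * vandermonde μ)ᵀ j) = (Q * diagonal c * vandermonde μ).col from rfl, linearIndependent_cols_iff_isUnit, Matrix.isUnit_iff_isUnit_det,
    det_mul, det_mul, det_diagonal, isUnit_iff_ne_zero] at h
  intro i hi
  exact h (by simp [Finset.prod_eq_zero (Finset.mem_univ i) hi])


/-- If `A` has `d` distinct real eigenvalues (diagonalization
`A = Q Λ Q⁻¹` with injective eigenvalue function `lam`) and the Krylov vectors
`x₀, Ax₀, …, A^{d-1}x₀` are linearly independent, then for any `Δt > 0` and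
`t₁ ≥ 0`, the points `exp(A t_j) x₀` with `t_j = t₁ + j Δt`, `j = 0, …, d-1`,
are linearly independent. -/
theorem stmt0 (d : ℕ) (A Q : Matrix (Fin d) (Fin d) ℝ) (lam : Fin d → ℝ)
    (x₀ : Fin d → ℝ)
    (hQ : IsUnit Q.det)
    (hdiag : A = Q * Matrix.diagonal lam * Q⁻¹)
    (hlam : Function.Injective lam)
    (hKrylov : LinearIndependent ℝ (fun i : Fin d => (A ^ (i : ℕ)).mulVec x₀))
    (Δt t₁ : ℝ) (hΔt : 0 < Δt) (ht₁ : 0 ≤ t₁) :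
    LinearIndependent ℝ
      (fun j : Fin d => (NormedSpace.exp ((t₁ + (j : ℕ) * Δt) • A)).mulVec x₀) := by
  have hQ' : IsUnit Q := (Matrix.isUnit_iff_isUnit_det Q).2 hQ
  have hQQ : Q * Q⁻¹ = 1 := mul_nonsing_inv Q hQ
  have hQQ' : Q⁻¹ * Q = 1 := nonsing_inv_mul Q hQ
  set y : Fin d → ℝ := Q⁻¹.mulVec x₀ with hy
  -- powers
  have hAk : ∀ k : ℕ, A ^ k = Q * diagonal (fun i => lam i ^ k) * Q⁻¹ := by
    intro k
    induction k with
    | zero => simp [hQQ]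
    | succ k ih =>
        rw [pow_succ, ih, hdiag]
        have : (fun i => lam i ^ k) = lam ^ k := by funext i; simp
        calc Q * diagonal (fun i => lam i ^ k) * Q⁻¹ * (Q * diagonal lam * Q⁻¹)
            = Q * (diagonal (fun i => lam i ^ k) * (Q⁻¹ * Q) * diagonal lam) * Q⁻¹ := by
              noncomm_ring
          _ = Q * diagonal (fun i => lam i ^ (k + 1)) * Q⁻¹ := by
              rw [hQQ']
              simp [diagonal_mul_diagonal, pow_succ]
  have hKry2 : LinearIndependent ℝ (fun j : Fin d => Q.mulVec (fun i => y i * lam i ^ (j : ℕ))) := by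
    have e : (fun i : Fin d => (A ^ (i : ℕ)).mulVec x₀)
        = fun j : Fin d => Q.mulVec (fun i => y i * lam i ^ (j : ℕ)) := by
      funext j
      have hin : (diagonal fun i => lam i ^ (j : ℕ)) *ᵥ (Q⁻¹ *ᵥ x₀)
          = fun i => y i * lam i ^ (j : ℕ) := by
        funext i; rw [mulVec_diagonal, mul_comm]
      rw [hAk, Matrix.mul_assoc, ← mulVec_mulVec, ← mulVec_mulVec, hin]
    rw [← e]; exact hKrylov
  have hyne : ∀ i, y i ≠ 0 := aux_y d Q y lam hKry2
  -- exponential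
  have hexp : ∀ t : ℝ, NormedSpace.exp (t • A)
      = Q * diagonal (fun i => Real.exp (t * lam i)) * Q⁻¹ := by
    intro t
    have hv : (fun i => t * lam i) = t • lam := by funext i; simp
    have h1 : t • A = Q * diagonal (fun i => t * lam i) * Q⁻¹ := by
      rw [hdiag, hv, diagonal_smul, mul_smul_comm, smul_mul_assoc]
    rw [h1, Matrix.exp_conj Q _ hQ', Matrix.exp_diagonal, Pi.exp_def]
    congr 2
    funext i
    rw [← Real.exp_eq_exp_ℝ]
  have key : (fun j : Fin d => (NormedSpace.exp ((t₁ + (j : ℕ) * Δt) • A)).mulVec x₀)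
      = fun j : Fin d => Q.mulVec
          (fun i => (Real.exp (lam i * t₁) * y i) * (Real.exp (lam i * Δt)) ^ (j : ℕ)) := by
    funext j
    have hin : (diagonal fun i => Real.exp ((t₁ + (j : ℕ) * Δt) * lam i)) *ᵥ (Q⁻¹ *ᵥ x₀)
        = fun i => Real.exp (lam i * t₁) * y i * Real.exp (lam i * Δt) ^ (j : ℕ) := by
      funext i
      rw [mulVec_diagonal]
      have h2 : (t₁ + (j : ℕ) * Δt) * lam i = lam i * t₁ + (j : ℕ) * (lam i * Δt) := by ring
      rw [h2, Real.exp_add, Real.exp_nat_mul]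
      ring
    rw [hexp, Matrix.mul_assoc, ← mulVec_mulVec, ← mulVec_mulVec, hin]
  rw [key]
  refine aux_li d Q hQ _ _ (fun i => mul_ne_zero (Real.exp_ne_zero _) (hyne i)) ?_
  intro i j hij
  exact hlam (mul_right_cancel₀ hΔt.ne' (Real.exp_injective hij))
end

section
/- Let A, A' ∈ ℝ^{d×d} and x₀, x₀' ∈ ℝ^d. If exp(At) x₀ = exp(A't) x₀' for all t ≥ 0, then x₀ = x₀' and, provided {x₀, Ax₀, ..., A^{d-1}x₀} is linearly independent, A = A'. -/
attribute [local instance] Matrix.linftyOpNormedAddCommGroup Matrix.linftyOpNormedRing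
  Matrix.linftyOpNormedAlgebra Matrix.linftyOpNormedSpace

open Matrix

/-- If `exp(At)x₀ = exp(A't)x₀'` for all `t ≥ 0`, then `x₀ = x₀'`,
and if moreover the Krylov vectors `x₀, Ax₀, …, A^{d-1}x₀` are linearly
independent, then `A = A'`. -/
theorem stmt5 (d : ℕ) (A A' : Matrix (Fin d) (Fin d) ℝ) (x₀ x₀' : Fin d → ℝ)
    (h : ∀ t : ℝ, 0 ≤ t →
      (NormedSpace.exp (t • A)).mulVec x₀ = (NormedSpace.exp (t • A')).mulVec x₀') :
    x₀ = x₀' ∧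
    (LinearIndependent ℝ (fun i : Fin d => (A ^ (i : ℕ)).mulVec x₀) → A = A') := by
  -- continuous linear maps `M ↦ M.mulVec v`
  let L : Matrix (Fin d) (Fin d) ℝ →L[ℝ] (Fin d → ℝ) :=
    LinearMap.toContinuousLinearMap
      { toFun := fun M => M.mulVec x₀
        map_add' := fun M N => Matrix.add_mulVec M N x₀
        map_smul' := fun c M => Matrix.smul_mulVec c M x₀ }
  let L' : Matrix (Fin d) (Fin d) ℝ →L[ℝ] (Fin d → ℝ) :=
    LinearMap.toContinuousLinearMap
      { toFun := fun M => M.mulVec x₀'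
        map_add' := fun M N => Matrix.add_mulVec M N x₀'
        map_smul' := fun c M => Matrix.smul_mulVec c M x₀' }
  -- derivative facts
  have hder : ∀ (B : Matrix (Fin d) (Fin d) ℝ) (n : ℕ) (t : ℝ),
      HasDerivAt (fun u : ℝ => ((B ^ n) * NormedSpace.exp (u • B)))
        ((B ^ (n+1)) * NormedSpace.exp (t • B)) t := by
    intro B n t
    have h1 : HasDerivAt (fun u : ℝ => NormedSpace.exp (u • B))
        (NormedSpace.exp (t • B) * B) t := hasDerivAt_exp_smul_const B t
    have h2 := h1.const_mul (B ^ n)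
    have hc : Commute B (NormedSpace.exp (t • B)) :=
      ((Commute.refl B).smul_right t).exp_right
    refine h2.congr_deriv (Eq.symm ?_)
    rw [← mul_assoc, pow_succ, mul_assoc, hc.eq, ← mul_assoc]
  -- key induction
  have key : ∀ n : ℕ, ∀ t ∈ Set.Ici (0:ℝ),
      ((A ^ n) * NormedSpace.exp (t • A)).mulVec x₀
        = ((A' ^ n) * NormedSpace.exp (t • A')).mulVec x₀' := by
    intro n
    induction n with
    | zero => intro t ht; simpa using h t ht
    | succ n ih =>
      intro t ht
      have hf : HasDerivWithinAt
          (fun u : ℝ => ((A ^ n) * NormedSpace.exp (u • A)).mulVec x₀)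
          (((A ^ (n+1)) * NormedSpace.exp (t • A)).mulVec x₀) (Set.Ici 0) t :=
        ((L.hasFDerivAt.comp_hasDerivAt t (hder A n t))).hasDerivWithinAt
      have hg : HasDerivWithinAt
          (fun u : ℝ => ((A' ^ n) * NormedSpace.exp (u • A')).mulVec x₀')
          (((A' ^ (n+1)) * NormedSpace.exp (t • A')).mulVec x₀') (Set.Ici 0) t :=
        ((L'.hasFDerivAt.comp_hasDerivAt t (hder A' n t))).hasDerivWithinAt
      have hg' : HasDerivWithinAt
          (fun u : ℝ => ((A' ^ n) * NormedSpace.exp (u • A')).mulVec x₀')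
          (((A ^ (n+1)) * NormedSpace.exp (t • A)).mulVec x₀) (Set.Ici 0) t :=
        hf.congr (fun u hu => (ih u hu).symm) ((ih t ht).symm)
      exact ((uniqueDiffOn_Ici 0) t ht).eq_deriv _ hg' hg
  have hpow : ∀ n : ℕ, (A ^ n).mulVec x₀ = (A' ^ n).mulVec x₀' := by
    intro n
    have := key n 0 Set.self_mem_Ici
    simpa using this
  have hx : x₀ = x₀' := by simpa using hpow 0
  refine ⟨hx, fun li => ?_⟩
  rcases isEmpty_or_nonempty (Fin d) with hd | hd
  · exact Subsingleton.elim A A'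
  -- build a basis from the Krylov vectors
  have hcard : Fintype.card (Fin d) = Module.finrank ℝ (Fin d → ℝ) := by simp
  let B := basisOfLinearIndependentOfCardEqFinrank li hcard
  have hB : ∀ i, B i = (A ^ (i : ℕ)).mulVec x₀ := fun i =>
    congrFun (coe_basisOfLinearIndependentOfCardEqFinrank li hcard) i
  have hpw : ∀ n : ℕ, (A ^ n).mulVec x₀ = (A' ^ n).mulVec x₀ := by
    intro n; rw [hpow n, hx]
  have : Matrix.toLin' A = Matrix.toLin' A' := by
    apply B.ext
    intro i
    rw [hB i]
    show A.mulVec ((A ^ (i:ℕ)).mulVec x₀) = A'.mulVec ((A ^ (i:ℕ)).mulVec x₀)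
    calc A.mulVec ((A ^ (i:ℕ)).mulVec x₀) = (A ^ ((i:ℕ)+1)).mulVec x₀ := by
          rw [Matrix.mulVec_mulVec, ← pow_succ']
      _ = (A' ^ ((i:ℕ)+1)).mulVec x₀ := hpw _
      _ = A'.mulVec ((A' ^ (i:ℕ)).mulVec x₀) := by rw [Matrix.mulVec_mulVec, ← pow_succ']
      _ = A'.mulVec ((A ^ (i:ℕ)).mulVec x₀) := by rw [hpw (i:ℕ)]
  exact Matrix.toLin'.injective this
end

section
/- Let A ∈ ℝ^{d×d} have d distinct real eigenvalues and x₀ ∈ ℝ^d be such that {x₀, Ax₀, ..., A^{d-1}x₀} is linearly independent. For Δt > 0 and integer k ≥ 2, set x̃₀ = (I + exp(AΔt) + ... + exp((k-1)AΔt))x₀ / k. Then {x̃₀, Ax̃₀, ..., A^{d-1}x̃₀} is linearly independent. -/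
open Matrix Finset

/-- With `A` having `d` distinct real eigenvalues and Krylov
independence for `x₀`, the aggregated initial condition
`x̃₀ = (I + exp(AΔt) + ⋯ + exp((k-1)AΔt)) x₀ / k` again satisfies the Krylov
independence condition. -/
theorem stmt8 (d : ℕ) (A Q : Matrix (Fin d) (Fin d) ℝ) (lam : Fin d → ℝ)
    (x₀ : Fin d → ℝ)
    (hQ : IsUnit Q.det)
    (hdiag : A = Q * Matrix.diagonal lam * Q⁻¹)
    (hlam : Function.Injective lam)
    (hKrylov : LinearIndependent ℝ (fun i : Fin d => (A ^ (i : ℕ)).mulVec x₀))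
    (Δt : ℝ) (hΔt : 0 < Δt) (k : ℕ) (hk : 2 ≤ k) :
    LinearIndependent ℝ (fun i : Fin d =>
      (A ^ (i : ℕ)).mulVec
        (((k : ℝ)⁻¹ •
          ∑ m ∈ Finset.range k, NormedSpace.exp (((m : ℝ) * Δt) • A)).mulVec x₀)) := by
  have hQu : IsUnit Q := (Matrix.isUnit_iff_isUnit_det _).mpr hQ
  have hQQ : Q⁻¹ * Q = 1 := Matrix.nonsing_inv_mul Q hQ
  set g : Fin d → ℝ := fun i => (k : ℝ)⁻¹ * ∑ m ∈ Finset.range k, Real.exp ((m : ℝ) * Δt * lam i)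
    with hg
  set B : Matrix (Fin d) (Fin d) ℝ :=
      (k : ℝ)⁻¹ • ∑ m ∈ Finset.range k, NormedSpace.exp (((m : ℝ) * Δt) • A) with hB
  -- each exponential is a conjugated diagonal
  have hexp : ∀ m : ℕ, NormedSpace.exp (((m : ℝ) * Δt) • A)
      = Q * Matrix.diagonal (fun i => Real.exp ((m : ℝ) * Δt * lam i)) * Q⁻¹ := by
    intro m
    have h1 : ((m : ℝ) * Δt) • A = Q * (((m : ℝ) * Δt) • Matrix.diagonal lam) * Q⁻¹ := by
      rw [hdiag]; rw [Matrix.mul_smul, Matrix.smul_mul]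
    rw [h1, Matrix.exp_conj Q (((m:ℝ)*Δt) • Matrix.diagonal lam) hQu]
    congr 1
    congr 1
    rw [← Matrix.diagonal_smul, Matrix.exp_diagonal]
    have hv : NormedSpace.exp (((m : ℝ) * Δt) • lam)
        = fun i => Real.exp ((m : ℝ) * Δt * lam i) := by
      funext i
      rw [Pi.coe_exp, Pi.smul_apply, smul_eq_mul, Real.exp_eq_exp_ℝ]
    rw [hv]
  have hBdiag : B = Q * Matrix.diagonal g * Q⁻¹ := by
    rw [hB]
    have hsum : ∑ m ∈ Finset.range k, NormedSpace.exp (((m : ℝ) * Δt) • A)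
        = Q * Matrix.diagonal (fun i => ∑ m ∈ Finset.range k,
            Real.exp ((m : ℝ) * Δt * lam i)) * Q⁻¹ := by
      rw [Finset.sum_congr rfl (fun m _ => hexp m)]
      rw [← Finset.sum_mul, ← Finset.mul_sum]
      congr 2
      ext i j
      by_cases h : i = j <;> simp [Matrix.sum_apply, Matrix.diagonal_apply, h]
    rw [hsum, ← Matrix.smul_mul, ← Matrix.mul_smul, ← Matrix.diagonal_smul]
    have hgv : ((k : ℝ)⁻¹ • fun i => ∑ m ∈ Finset.range k, Real.exp ((m : ℝ) * Δt * lam i)) = g := by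
      funext i
      simp [hg, smul_eq_mul]
    rw [hgv]
  -- g is positive, hence B invertible
  have hgpos : ∀ i, 0 < g i := by
    intro i
    apply mul_pos (by positivity)
    apply Finset.sum_pos (fun m _ => Real.exp_pos _)
    exact Finset.nonempty_range_iff.mpr (by omega)
  have hdetQ : Q.det ≠ 0 := hQ.ne_zero
  have hBunit : IsUnit B := by
    rw [Matrix.isUnit_iff_isUnit_det, hBdiag, isUnit_iff_ne_zero]
    rw [Matrix.det_mul, Matrix.det_mul, Matrix.det_diagonal, Matrix.det_nonsing_inv]
    have h1 : (0:ℝ) < ∏ i, g i := Finset.prod_pos (fun i _ => hgpos i)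
    have h2 : Ring.inverse Q.det ≠ 0 := by
      rw [Ring.inverse_eq_inv]; exact inv_ne_zero hdetQ
    exact mul_ne_zero (mul_ne_zero hdetQ h1.ne') h2
  -- conjugation multiplies nicely
  have key : ∀ X Y : Matrix (Fin d) (Fin d) ℝ,
      (Q * X * Q⁻¹) * (Q * Y * Q⁻¹) = Q * (X * Y) * Q⁻¹ := by
    intro X Y
    simp only [Matrix.mul_assoc]
    rw [← Matrix.mul_assoc Q⁻¹ Q (Y * Q⁻¹), hQQ, Matrix.one_mul]
  -- B commutes with A
  have hcomm : Commute A B := by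
    rw [hdiag, hBdiag]
    show _ = _
    rw [key, key, Matrix.diagonal_mul_diagonal, Matrix.diagonal_mul_diagonal]
    congr 2
    exact congrArg _ (funext fun i => mul_comm _ _)
  -- rewrite the family as B applied to Krylov vectors
  have hfun : (fun i : Fin d => (A ^ (i : ℕ)).mulVec (B.mulVec x₀))
      = fun i : Fin d => B.mulVec ((A ^ (i : ℕ)).mulVec x₀) := by
    funext i
    rw [Matrix.mulVec_mulVec, Matrix.mulVec_mulVec, (hcomm.pow_left _).eq]
  show LinearIndependent ℝ (fun i : Fin d => (A ^ (i : ℕ)).mulVec (B.mulVec x₀))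
  rw [hfun]
  have hinj : Function.Injective B.mulVecLin := by
    obtain ⟨u, hu⟩ := hBunit
    have hinv : (↑u⁻¹ : Matrix (Fin d) (Fin d) ℝ) * B = 1 := by rw [← hu]; exact u.inv_mul
    intro x y hxy
    have h2 : (↑u⁻¹ : Matrix (Fin d) (Fin d) ℝ).mulVec (B.mulVec x)
        = (↑u⁻¹ : Matrix (Fin d) (Fin d) ℝ).mulVec (B.mulVec y) := by
      simp only [Matrix.mulVecLin_apply] at hxy
      rw [hxy]
    rwa [Matrix.mulVec_mulVec, Matrix.mulVec_mulVec, hinv, Matrix.one_mulVec,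
      Matrix.one_mulVec] at h2
  exact hKrylov.map' B.mulVecLin (LinearMap.ker_eq_bot.mpr hinj)
end

section
/- Let A ∈ ℝ^{d×d}, x₀ ∈ ℝ^d with {x₀, Ax₀, ..., A^{d-1}x₀} linearly independent, and let W(t) := the d×(d+d²) matrix whose first d columns are exp(At) and whose remaining d² columns are (∂exp(At)/∂a_{jk}) x₀ for j,k = 1,...,d (derivative of the matrix exponential in the (j,k) entry of A). If ξ ∈ ℝ^{d+d²}, written as (ξ_d, Ξ) with ξ_d ∈ ℝ^d and Ξ ∈ ℝ^{d×d}, satisfies W^{(m)}(0) ξ = 0 for all m = 0, 1, ..., d — equivalently A^m ξ_d + Σ_{l=1}^{m} A^{m−l} Ξ A^{l−1} x₀ = 0 for m = 0,...,d — then ξ_d = 0 and Ξ = 0. -/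
open Matrix Finset

/-- Suppose the Krylov vectors `x₀, Ax₀, …, A^{d-1}x₀` are
linearly independent. If `(ξ_d, Ξ)` satisfies
`A^m ξ_d + ∑_{l=1}^{m} A^{m−l} Ξ A^{l−1} x₀ = 0` for all `m = 0, …, d`,
then `ξ_d = 0` and `Ξ = 0`. -/
theorem stmt19 (d : ℕ) (A : Matrix (Fin d) (Fin d) ℝ) (x₀ : Fin d → ℝ)
    (hKrylov : LinearIndependent ℝ (fun i : Fin d => (A ^ (i : ℕ)).mulVec x₀))
    (ξd : Fin d → ℝ) (Ξ : Matrix (Fin d) (Fin d) ℝ)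
    (h : ∀ m : ℕ, m ≤ d →
      (A ^ m).mulVec ξd +
        ∑ l ∈ Finset.range m, (A ^ (m - 1 - l) * Ξ * A ^ l).mulVec x₀ = 0) :
    ξd = 0 ∧ Ξ = 0 := by
  have h0 : ξd = 0 := by
    have := h 0 (Nat.zero_le d)
    simpa using this
  have key : ∀ m, m < d → Ξ.mulVec ((A ^ m).mulVec x₀) = 0 := by
    intro m
    induction m using Nat.strong_induction_on with
    | _ m ih =>
      intro hm
      have hsum : ∑ l ∈ Finset.range (m + 1), (A ^ (m - l) * Ξ * A ^ l).mulVec x₀ = 0 := by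
        have := h (m + 1) hm
        simpa [h0, Matrix.mulVec_zero, Nat.add_sub_cancel] using this
      rw [Finset.sum_range_succ] at hsum
      have hz : ∑ l ∈ Finset.range m, (A ^ (m - l) * Ξ * A ^ l).mulVec x₀ = 0 := by
        apply Finset.sum_eq_zero
        intro l hl
        have hl' := Finset.mem_range.mp hl
        have : (A ^ (m - l) * Ξ * A ^ l).mulVec x₀
            = (A ^ (m - l)).mulVec (Ξ.mulVec ((A ^ l).mulVec x₀)) := by
          rw [Matrix.mulVec_mulVec, Matrix.mulVec_mulVec, Matrix.mul_assoc]
        rw [this, ih l hl' (lt_trans hl' hm), Matrix.mulVec_zero]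
      rw [hz, zero_add, Nat.sub_self, pow_zero, one_mul] at hsum
      rw [Matrix.mulVec_mulVec]
      exact hsum
  rcases Nat.eq_zero_or_pos d with hd | hd
  · subst hd
    constructor
    · funext i; exact i.elim0
    · ext i j; exact i.elim0
  haveI : Nonempty (Fin d) := ⟨⟨0, hd⟩⟩
  have hcard : Fintype.card (Fin d) = Module.finrank ℝ (Fin d → ℝ) := by
    simp
  let b := basisOfLinearIndependentOfCardEqFinrank hKrylov hcard
  have hb : Ξ.mulVecLin = 0 := by
    apply b.ext
    intro i
    have hbi : b i = (A ^ (i : ℕ)).mulVec x₀ := by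
      simp [b, coe_basisOfLinearIndependentOfCardEqFinrank]
    simp [hbi, Matrix.mulVecLin_apply, key (i : ℕ) i.isLt]
  refine ⟨h0, ?_⟩
  ext i j
  have := congrArg (fun f => f (Pi.single j 1) i) hb
  simpa [Matrix.mulVecLin_apply, Matrix.mulVec_single] using this
end
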